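/- Mismatch counting lemma: let C be a string of length 2m with u numerals (non-⋆ positions) and T a tile with v numerals, |T| ≤ m. If T has no match at any of the 2m starting positions inside a window such that each starting offset produces at least one collision between a numeral of C and a numeral of T, then u · v ≥ 2m; in particular max(u, v) ≥ √m. -/

import Mathlib

/-- Mismatch counting: let `PC` be the numeral positions of a string `C` of length `2m`
and `PT` the numeral positions of a tile of length at most `m`. If every starting
offset `d < 2m` produces a collision (a pair `p ∈ PC`, `q ∈ PT` with `p = d + q`),
then `|PC| · |PT| ≥ 2m`; in particular `max(|PC|, |PT|) ≥ √m`. -/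
theorem mismatch_counting (m : ℕ) (PC PT : Finset ℕ)
    (hPC : PC ⊆ Finset.range (2 * m)) (hPT : PT ⊆ Finset.range m)
    (hcoll : ∀ d : ℕ, d < 2 * m → ∃ p ∈ PC, ∃ q ∈ PT, p = d + q) :
    2 * m ≤ PC.card * PT.card ∧ (Nat.sqrt m ≤ PC.card ∨ Nat.sqrt m ≤ PT.card) := by
  classical
  have key : ∀ d ∈ Finset.range (2 * m), ∃ pq : ℕ × ℕ,
      pq ∈ PC ×ˢ PT ∧ pq.1 = d + pq.2 := by
    intro d hd
    obtain ⟨p, hp, q, hq, hpq⟩ := hcoll d (Finset.mem_range.mp hd)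
    exact ⟨(p, q), Finset.mk_mem_product hp hq, hpq⟩
  choose f hf hfeq using key
  have h1 : 2 * m ≤ PC.card * PT.card := by
    have : (Finset.range (2 * m)).card ≤ (PC ×ˢ PT).card :=
      Finset.card_le_card_of_injOn (fun d => if h : d ∈ Finset.range (2 * m) then f d h else (0, 0))
      (fun d hd => by have hd' : d ∈ Finset.range (2 * m) := hd; simpa only [dif_pos hd', Finset.mem_coe] using hf d hd')
      (by
        intro a ha b hb hab
        have ha' : a ∈ Finset.range (2 * m) := ha
        have hb' : b ∈ Finset.range (2 * m) := hb
        simp only at hab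
        rw [dif_pos ha', dif_pos hb'] at hab
        have ea := hfeq a ha'
        have eb := hfeq b hb'
        rw [hab] at ea
        omega)
    simpa [Finset.card_product] using this
  refine ⟨h1, ?_⟩
  by_contra h
  push_neg at h
  obtain ⟨h2, h3⟩ := h
  have hs : Nat.sqrt m * Nat.sqrt m ≤ m := by have := Nat.sqrt_le' m; rwa [pow_two] at this
  nlinarith [h1, h2, h3]
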